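/- Let f : ℝⁿ → ℝ be a convex function, x ∈ ℝⁿ and t > 0. Then the t-spherical subdifferential D_t f(x) is convex and compact. -/

import Mathlib

open scoped RealInnerProductSpace

/-- The ε-subdifferential of `g` at `x`. -/
def epsSubdiff {n : ℕ} (g : EuclideanSpace ℝ (Fin n) → ℝ) (ε : ℝ)
    (x : EuclideanSpace ℝ (Fin n)) : Set (EuclideanSpace ℝ (Fin n)) :=
  {ξ | ∀ y, g y ≥ g x + ⟪ξ, y - x⟫ - ε}

/-- The subdifferential of `g` at `x`. -/
def subdiff {n : ℕ} (g : EuclideanSpace ℝ (Fin n) → ℝ)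
    (x : EuclideanSpace ℝ (Fin n)) : Set (EuclideanSpace ℝ (Fin n)) :=
  {ξ | ∀ y, g y ≥ g x + ⟪ξ, y - x⟫}

/-- The t-spherical subdifferential of `g` at `x`. -/
def sphSubdiff {n : ℕ} (g : EuclideanSpace ℝ (Fin n) → ℝ) (t : ℝ)
    (x : EuclideanSpace ℝ (Fin n)) : Set (EuclideanSpace ℝ (Fin n)) :=
  convexHull ℝ {ξ | ∃ d : EuclideanSpace ℝ (Fin n), ‖d‖ = 1 ∧ ξ ∈ subdiff g (x + t • d)}

/-- Convex hull of a compact set in Euclidean space is compact. -/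
lemma isCompact_convexHull_aux {n : ℕ} {s : Set (EuclideanSpace ℝ (Fin n))}
    (hs : IsCompact s) : IsCompact (convexHull ℝ s) := by
  classical
  rcases s.eq_empty_or_nonempty with rfl | ⟨x₀, hx₀⟩
  · simp only [convexHull_empty]; exact isCompact_empty
  set φ : (Fin (n+1) → ℝ) × (Fin (n+1) → EuclideanSpace ℝ (Fin n)) → EuclideanSpace ℝ (Fin n) :=
    fun p => ∑ i, p.1 i • p.2 i with hφ
  have hφc : Continuous φ := by
    apply continuous_finset_sum
    intro i _
    exact ((continuous_apply i).comp continuous_fst).smul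
      ((continuous_apply i).comp continuous_snd)
  set K : Set ((Fin (n+1) → ℝ) × (Fin (n+1) → EuclideanSpace ℝ (Fin n))) :=
    (stdSimplex ℝ (Fin (n+1))) ×ˢ (Set.pi Set.univ fun _ => s) with hK
  have hKc : IsCompact K :=
    (isCompact_stdSimplex (𝕜 := ℝ) (ι := Fin (n+1))).prod (isCompact_univ_pi fun _ => hs)
  have himg : convexHull ℝ s = φ '' K := by
    apply Set.Subset.antisymm
    · intro x hx
      obtain ⟨ι, hι, z, w, hzs, hind, hwpos, hwsum, hwx⟩ :=
        eq_pos_convex_span_of_mem_convexHull hx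
      have hcard : Fintype.card ι ≤ n + 1 := by
        calc Fintype.card ι ≤ Module.finrank ℝ (vectorSpan ℝ (Set.range z)) + 1 :=
              hind.card_le_finrank_succ
          _ ≤ Module.finrank ℝ (EuclideanSpace ℝ (Fin n)) + 1 := by
              have := Submodule.finrank_le (vectorSpan ℝ (Set.range z))
              omega
          _ = n + 1 := by rw [finrank_euclideanSpace_fin]
      obtain ⟨e⟩ := Function.Embedding.nonempty_of_card_le (β := Fin (n+1))
        (by simpa using hcard)
      set W : Fin (n+1) → ℝ := fun j => if h : ∃ i, e i = j then w h.choose else 0 with hW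
      set V : Fin (n+1) → EuclideanSpace ℝ (Fin n) :=
        fun j => if h : ∃ i, e i = j then z h.choose else x₀ with hV
      have hWe : ∀ i, W (e i) = w i := by
        intro i
        have h : ∃ i', e i' = e i := ⟨i, rfl⟩
        have hc : h.choose = i := e.injective h.choose_spec
        simp only [hW, dif_pos h, hc]
      have hVe : ∀ i, V (e i) = z i := by
        intro i
        have h : ∃ i', e i' = e i := ⟨i, rfl⟩
        have hc : h.choose = i := e.injective h.choose_spec
        simp only [hV, dif_pos h, hc]
      have hWzero : ∀ j, (¬ ∃ i, e i = j) → W j = 0 := fun j h => dif_neg h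
      have hnotmem : ∀ j ∉ Finset.univ.map e, W j = 0 := by
        intro j hj
        apply hWzero
        rintro ⟨i, rfl⟩
        exact hj (Finset.mem_map.mpr ⟨i, Finset.mem_univ i, rfl⟩)
      have hsum1 : ∑ j, W j = 1 := by
        rw [← Finset.sum_subset (Finset.subset_univ (Finset.univ.map e))
          (fun j _ hj => hnotmem j hj), Finset.sum_map, ← hwsum]
        exact Finset.sum_congr rfl fun i _ => hWe i
      have hsumx : ∑ j, W j • V j = x := by
        rw [← Finset.sum_subset (Finset.subset_univ (Finset.univ.map e))
          (fun j _ hj => by rw [hnotmem j hj, zero_smul]), Finset.sum_map, ← hwx]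
        exact Finset.sum_congr rfl fun i _ => by
          show W (e i) • V (e i) = w i • z i; rw [hWe, hVe]
      refine ⟨(W, V), ⟨⟨?_, hsum1⟩, ?_⟩, hsumx⟩
      · intro j
        show 0 ≤ W j
        by_cases h : ∃ i, e i = j
        · rw [hW]; simp only [dif_pos h]; exact (hwpos _).le
        · rw [hWzero j h]
      · intro j _
        show V j ∈ s
        by_cases h : ∃ i, e i = j
        · rw [hV]; simp only [dif_pos h]; exact hzs (Set.mem_range_self _)
        · rw [hV]; simp only [dif_neg h]; exact hx₀
    · rintro x ⟨⟨W, V⟩, ⟨⟨hW0, hW1⟩, hVs⟩, rfl⟩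
      exact (convex_convexHull ℝ s).sum_mem (fun i _ => hW0 i) hW1
        (fun i _ => subset_convexHull ℝ s (hVs i (Set.mem_univ i)))
  rw [himg]
  exact hKc.image hφc

theorem sphSubdiff_convex_compact {n : ℕ}
    (f : EuclideanSpace ℝ (Fin n) → ℝ) (hf : ConvexOn ℝ Set.univ f)
    (x : EuclideanSpace ℝ (Fin n)) (t : ℝ) (ht : 0 < t) :
    Convex ℝ (sphSubdiff f t x) ∧ IsCompact (sphSubdiff f t x) := by
  have hfc : Continuous f := by
    rw [← continuousOn_univ]
    exact hf.continuousOn isOpen_univ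
  set S : Set (EuclideanSpace ℝ (Fin n)) :=
    {ξ | ∃ d : EuclideanSpace ℝ (Fin n), ‖d‖ = 1 ∧ ξ ∈ subdiff f (x + t • d)} with hS
  set R : ℝ := ‖x‖ + t with hR
  obtain ⟨a, ha, hM1⟩ := (isCompact_closedBall (0 : EuclideanSpace ℝ (Fin n)) (R + 1)).exists_isMaxOn
    ⟨0, by simp only [Metric.mem_closedBall, dist_self]; positivity⟩ hfc.continuousOn
  obtain ⟨b, hb, hM2⟩ := (isCompact_closedBall (0 : EuclideanSpace ℝ (Fin n)) (R + 1)).exists_isMinOn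
    ⟨0, by simp only [Metric.mem_closedBall, dist_self]; positivity⟩ hfc.continuousOn
  set M1 := f a with hM1'
  set M2 := f b with hM2'
  have hzball : ∀ d : EuclideanSpace ℝ (Fin n), ‖d‖ = 1 →
      x + t • d ∈ Metric.closedBall (0 : EuclideanSpace ℝ (Fin n)) (R + 1) := by
    intro d hd
    simp only [Metric.mem_closedBall, dist_zero_right]
    calc ‖x + t • d‖ ≤ ‖x‖ + ‖t • d‖ := norm_add_le _ _
      _ = ‖x‖ + t := by rw [norm_smul, hd, Real.norm_eq_abs, abs_of_pos ht, mul_one]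
      _ ≤ R + 1 := by simp [hR]
  -- bound on subgradients
  have hbd : ∀ ξ ∈ S, ‖ξ‖ ≤ M1 - M2 := by
    rintro ξ ⟨d, hd, hsub⟩
    set z := x + t • d with hz'
    have hz := hzball d hd
    rcases eq_or_ne ξ 0 with rfl | hne
    · simp only [norm_zero, sub_nonneg]
      exact le_trans (hM2 hz) (hM1 hz)
    · have hξpos : (0:ℝ) < ‖ξ‖ := norm_pos_iff.mpr hne
      have hy : z + ‖ξ‖⁻¹ • ξ ∈ Metric.closedBall (0 : EuclideanSpace ℝ (Fin n)) (R + 1) := by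
        simp only [Metric.mem_closedBall, dist_zero_right]
        calc ‖z + ‖ξ‖⁻¹ • ξ‖ ≤ ‖z‖ + ‖‖ξ‖⁻¹ • ξ‖ := norm_add_le _ _
          _ ≤ R + 1 := by
              refine add_le_add ?_ ?_
              · calc ‖z‖ ≤ ‖x‖ + ‖t • d‖ := norm_add_le _ _
                  _ = R := by rw [norm_smul, hd, Real.norm_eq_abs, abs_of_pos ht, mul_one]
              · rw [norm_smul, Real.norm_eq_abs, abs_of_pos (by positivity)]
                field_simp
                exact le_rfl
      have hkey := hsub (z + ‖ξ‖⁻¹ • ξ)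
      have hinner : ⟪ξ, (z + ‖ξ‖⁻¹ • ξ) - z⟫ = ‖ξ‖ := by
        simp only [add_sub_cancel_left, inner_smul_right, real_inner_self_eq_norm_sq]
        field_simp
      rw [hinner] at hkey
      have h1 : f z + ‖ξ‖ ≤ M1 := le_trans hkey (hM1 hy)
      have h2 : M2 ≤ f z := hM2 hz
      linarith
  -- S is the image of a compact set
  set C : Set (EuclideanSpace ℝ (Fin n) × EuclideanSpace ℝ (Fin n)) :=
    {p | ‖p.1‖ = 1 ∧ p.2 ∈ subdiff f (x + t • p.1)} with hC
  have hCclosed : IsClosed C := by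
    have h1 : IsClosed {p : EuclideanSpace ℝ (Fin n) × EuclideanSpace ℝ (Fin n) | ‖p.1‖ = 1} :=
      isClosed_eq (continuous_fst.norm) continuous_const
    have h2 : IsClosed {p : EuclideanSpace ℝ (Fin n) × EuclideanSpace ℝ (Fin n) |
        p.2 ∈ subdiff f (x + t • p.1)} := by
      have heq : {p : EuclideanSpace ℝ (Fin n) × EuclideanSpace ℝ (Fin n) |
          p.2 ∈ subdiff f (x + t • p.1)} =
          ⋂ y : EuclideanSpace ℝ (Fin n),
            {p | f (x + t • p.1) + ⟪p.2, y - (x + t • p.1)⟫ ≤ f y} := by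
        ext p
        simp only [subdiff, ge_iff_le, Set.mem_setOf_eq, Set.mem_iInter]
      rw [heq]
      refine isClosed_iInter fun y => isClosed_le ?_ continuous_const
      have hcz : Continuous fun p : EuclideanSpace ℝ (Fin n) × EuclideanSpace ℝ (Fin n) =>
          x + t • p.1 := continuous_const.add (continuous_fst.const_smul t)
      exact ((hfc.comp hcz).add (continuous_snd.inner (continuous_const.sub hcz)))
    exact h1.inter h2
  have hCbdd : Bornology.IsBounded C := by
    refine (Bornology.IsBounded.prod
      (Metric.isBounded_closedBall (x := (0 : EuclideanSpace ℝ (Fin n))) (r := 1))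
      (Metric.isBounded_closedBall (x := (0 : EuclideanSpace ℝ (Fin n))) (r := M1 - M2))).subset ?_
    rintro ⟨d, ξ⟩ ⟨hd, hsub⟩
    constructor
    · simp [Metric.mem_closedBall, dist_zero_right, hd]
    · simp only [Metric.mem_closedBall, dist_zero_right, Set.mem_setOf_eq]
      exact hbd ξ ⟨d, hd, hsub⟩
  have hCcompact : IsCompact C := Metric.isCompact_of_isClosed_isBounded hCclosed hCbdd
  have hSimage : S = Prod.snd '' C := by
    ext ξ
    constructor
    · rintro ⟨d, hd, hsub⟩; exact ⟨(d, ξ), ⟨hd, hsub⟩, rfl⟩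
    · rintro ⟨⟨d, ξ'⟩, ⟨hd, hsub⟩, rfl⟩; exact ⟨d, hd, hsub⟩
  have hScompact : IsCompact S := hSimage ▸ hCcompact.image continuous_snd
  exact ⟨convex_convexHull ℝ S, isCompact_convexHull_aux hScompact⟩
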